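/- For every integer k ≥ 0, the graph G_k has exactly 2^{k+2} − 2 vertices and has exactly two distinct maximum independent sets; each has size α(G_k) = 2^{k+1} − 1, and these two maximum independent sets partition V(G_k). -/

import Mathlib

open Finset

section HardCoreDefs

variable {V : Type*} [Fintype V] [DecidableEq V]

/-- `I` is an independent set of the simple graph `G`. -/
def IsIndep (G : SimpleGraph V) (I : Finset V) : Prop :=
  ∀ u ∈ I, ∀ v ∈ I, ¬ G.Adj u v

open Classical in
/-- The set `𝓘(G)` of independent sets of `G`. -/
noncomputable def indepSets (G : SimpleGraph V) : Finset (Finset V) :=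
  Finset.univ.filter fun I => IsIndep G I

/-- The hard-core partition function `Z_G(λ)`. -/
noncomputable def Z (G : SimpleGraph V) (lam : ℝ) : ℝ :=
  ∑ I ∈ indepSets G, lam ^ I.card

/-- The hard-core distribution `π_{G,λ}`. -/
noncomputable def hardCore (G : SimpleGraph V) (lam : ℝ) (I : Finset V) : ℝ :=
  lam ^ I.card / Z G lam

open Classical in
/-- The transition probabilities of the Glauber dynamics on independent sets of `G`
with fugacity `λ`. -/
noncomputable def glauberP (G : SimpleGraph V) (lam : ℝ) (I J : Finset V) : ℝ :=
  (1 / (Fintype.card V : ℝ)) * ∑ v : V,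
    if v ∈ I then
      (if J = I.erase v then 1 / (lam + 1) else if J = I then lam / (lam + 1) else 0)
    else if IsIndep G (insert v I) then
      (if J = insert v I then lam / (lam + 1) else if J = I then 1 / (lam + 1) else 0)
    else (if J = I then 1 else 0)

/-- One step of the Glauber dynamics, applied to a distribution on independent sets. -/
noncomputable def stepDist (G : SimpleGraph V) (lam : ℝ) (μ : Finset V → ℝ) :
    Finset V → ℝ :=
  fun J => ∑ I ∈ indepSets G, μ I * glauberP G lam I J

/-- The distribution of the Glauber dynamics after `t` steps started from `I`. -/
noncomputable def distAfter (G : SimpleGraph V) (lam : ℝ) (I : Finset V) (t : ℕ) :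
    Finset V → ℝ :=
  (stepDist G lam)^[t] (fun J => if J = I then 1 else 0)

/-- Total variation distance between two distributions on independent sets. -/
noncomputable def tvDist (G : SimpleGraph V) (μ ν : Finset V → ℝ) : ℝ :=
  (1 / 2) * ∑ I ∈ indepSets G, |μ I - ν I|

/-- The mixing time `τ_{G,λ}` of the Glauber dynamics. -/
noncomputable def mixingTime (G : SimpleGraph V) (lam : ℝ) : ℕ :=
  sInf {t : ℕ | ∀ I ∈ indepSets G,
    tvDist G (distAfter G lam I t) (hardCore G lam) ≤ 1 / 4}

/-- `λ̃ = e^{|ln λ|} = max (λ, 1/λ)`. -/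
noncomputable def lamTilde (lam : ℝ) : ℝ := max lam lam⁻¹

/-- The independence number of the subgraph of `G` induced by `S`. -/
noncomputable def alphaOn (G : SimpleGraph V) (S : Finset V) : ℕ :=
  ((indepSets G).filter fun I => I ⊆ S).sup Finset.card

/-- The number of independent sets of the subgraph of `G` induced by `S`. -/
noncomputable def numIndepOn (G : SimpleGraph V) (S : Finset V) : ℕ :=
  ((indepSets G).filter fun I => I ⊆ S).card

/-- The subgraph of `G` induced by a finite vertex set `S`. -/
def inducedF (G : SimpleGraph V) (S : Finset V) : SimpleGraph {x : V // x ∈ S} :=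
  SimpleGraph.comap Subtype.val G

end HardCoreDefs

/-- The graph `G_k`, built from the complete binary tree of depth `k`. The nodes of the tree
are encoded by `Fin (2^(k+1) - 1)` in heap order: the node of index `i` represents the heap
label `i + 1`, so the parent of label `j ≥ 2` is `j / 2`. Each tree node `t` is replaced by a
pair of adjacent vertices `u_t = (t, false)` and `v_t = (t, true)`, and every tree edge `t t'`
yields the matching edges `u_t u_{t'}` and `v_t v_{t'}`. -/
def Gk (k : ℕ) : SimpleGraph (Fin (2 ^ (k + 1) - 1) × Bool) where
  Adj x y :=
    (x.1 = y.1 ∧ x.2 ≠ y.2) ∨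
    (x.2 = y.2 ∧ ((x.1 : ℕ) + 1 = ((y.1 : ℕ) + 1) / 2 ∨ (y.1 : ℕ) + 1 = ((x.1 : ℕ) + 1) / 2))
  symm := by
    constructor
    rintro x y (⟨h1, h2⟩ | ⟨h1, h2⟩)
    · exact Or.inl ⟨h1.symm, h2.symm⟩
    · exact Or.inr ⟨h1.symm, h2.symm⟩
  loopless := by
    constructor
    rintro x (⟨-, h⟩ | ⟨-, h⟩)
    · exact h rfl
    · omega


/-- Colour of heap label `j`: parity of its depth in the tree. -/
def cb (j : ℕ) : Bool := Nat.log2 j % 2 == 1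

lemma cb_one : cb 1 = false := by unfold cb; rw [Nat.log2_def]; norm_num

lemma cb_step {j : ℕ} (h : 2 ≤ j) : cb j = !cb (j / 2) := by
  unfold cb
  rw [Nat.log2_def, if_pos h]
  rcases Nat.mod_two_eq_zero_or_one (Nat.log2 (j/2)) with h'|h' <;>
    simp [Nat.add_mod, h']

lemma mem_indepSets {V : Type*} [Fintype V] [DecidableEq V] {G : SimpleGraph V}
    {I : Finset V} : I ∈ indepSets G ↔ IsIndep G I := by
  classical
  simp [indepSets]

/-- The two candidate maximum independent sets of `Gk k`. -/
def Sb (k : ℕ) (b : Bool) : Finset (Fin (2 ^ (k + 1) - 1) × Bool) :=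
  Finset.image (fun i => (i, xor b (cb ((i : ℕ) + 1)))) Finset.univ

lemma mem_Sb {k : ℕ} {b : Bool} {x : Fin (2 ^ (k + 1) - 1) × Bool} :
    x ∈ Sb k b ↔ x.2 = xor b (cb ((x.1 : ℕ) + 1)) := by
  constructor
  · rintro hx
    rcases Finset.mem_image.mp hx with ⟨i, -, rfl⟩
    rfl
  · intro hx
    exact Finset.mem_image.mpr ⟨x.1, Finset.mem_univ _, by rw [← hx]⟩

lemma card_Sb (k : ℕ) (b : Bool) : (Sb k b).card = 2 ^ (k + 1) - 1 := by
  rw [Sb, Finset.card_image_of_injective _ (fun i j h => congrArg Prod.fst h),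
    Finset.card_univ, Fintype.card_fin]

lemma key_Sb {k : ℕ} (b : Bool) (u v : Fin (2 ^ (k + 1) - 1) × Bool)
    (hu : u.2 = xor b (cb ((u.1 : ℕ) + 1))) (hv : v.2 = xor b (cb ((v.1 : ℕ) + 1)))
    (h : (u.1 : ℕ) + 1 = ((v.1 : ℕ) + 1) / 2) : u.2 ≠ v.2 := by
  have h2 : 2 ≤ (v.1 : ℕ) + 1 := by omega
  have hc := cb_step h2
  rw [← h] at hc
  rw [hu, hv, hc]
  cases b <;> cases cb ((u.1 : ℕ) + 1) <;> simp

lemma indep_Sb (k : ℕ) (b : Bool) : IsIndep (Gk k) (Sb k b) := by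
  intro u hu v hv hadj
  rw [mem_Sb] at hu hv
  rcases hadj with ⟨h1, h2⟩ | ⟨h1, h2⟩
  · exact h2 (by rw [hu, hv, h1])
  · rcases h2 with h2 | h2
    · exact key_Sb b u v hu hv h2 h1
    · exact key_Sb b v u hv hu h2 h1.symm

/-- For every `k ≥ 0`, the graph `G_k` has exactly `2^(k+2) - 2` vertices
and exactly two distinct maximum independent sets; each has size `α(G_k) = 2^(k+1) - 1`, and
the two maximum independent sets partition `V(G_k)`. -/
theorem statement_19 (k : ℕ) :
    Fintype.card (Fin (2 ^ (k + 1) - 1) × Bool) = 2 ^ (k + 2) - 2 ∧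
    alphaOn (Gk k) Finset.univ = 2 ^ (k + 1) - 1 ∧
    ∃ I J : Finset (Fin (2 ^ (k + 1) - 1) × Bool),
      I ∈ indepSets (Gk k) ∧ J ∈ indepSets (Gk k) ∧ I ≠ J ∧
      I.card = 2 ^ (k + 1) - 1 ∧ J.card = 2 ^ (k + 1) - 1 ∧
      Disjoint I J ∧ I ∪ J = Finset.univ ∧
      ∀ K ∈ indepSets (Gk k), K.card = 2 ^ (k + 1) - 1 → K = I ∨ K = J := by
  have hpow : 1 ≤ 2 ^ (k + 1) := Nat.one_le_two_pow
  have hpow2 : 2 ≤ 2 ^ (k + 1) := by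
    calc 2 = 2 ^ 1 := rfl
    _ ≤ 2 ^ (k + 1) := Nat.pow_le_pow_right (by norm_num) (by omega)
  have hn : 1 ≤ 2 ^ (k + 1) - 1 := by omega
  have hcardle : ∀ K ∈ indepSets (Gk k), K.card ≤ 2 ^ (k + 1) - 1 := by
    intro K hK
    rw [mem_indepSets] at hK
    have hinj : Set.InjOn Prod.fst (K : Set (Fin (2 ^ (k + 1) - 1) × Bool)) := by
      intro u hu v hv h
      by_contra hne
      exact hK u hu v hv (Or.inl ⟨h, fun hs => hne (Prod.ext h hs)⟩)
    calc K.card = (K.image Prod.fst).card := (Finset.card_image_of_injOn hinj).symm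
      _ ≤ Fintype.card (Fin (2 ^ (k + 1) - 1)) := by
          rw [← Finset.card_univ]; exact Finset.card_le_card (Finset.subset_univ _)
      _ = 2 ^ (k + 1) - 1 := Fintype.card_fin _
  refine ⟨?_, ?_, Sb k false, Sb k true, mem_indepSets.mpr (indep_Sb k false),
    mem_indepSets.mpr (indep_Sb k true), ?_, card_Sb k false, card_Sb k true, ?_, ?_, ?_⟩
  · rw [Fintype.card_prod, Fintype.card_fin, Fintype.card_bool]
    have : 2 ^ (k + 2) = 2 ^ (k + 1) * 2 := by ring
    omega
  · -- alphaOn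
    apply le_antisymm
    · apply Finset.sup_le
      intro K hK
      exact hcardle K (Finset.mem_filter.mp hK).1
    · have hmem : Sb k false ∈ (indepSets (Gk k)).filter (fun I => I ⊆ Finset.univ) :=
        Finset.mem_filter.mpr ⟨mem_indepSets.mpr (indep_Sb k false), Finset.subset_univ _⟩
      calc 2 ^ (k + 1) - 1 = (Sb k false).card := (card_Sb k false).symm
        _ ≤ _ := Finset.le_sup hmem
  · -- I ≠ J
    intro h
    have h0 : ((⟨0, by omega⟩ : Fin (2 ^ (k + 1) - 1)), false) ∈ Sb k false :=
      mem_Sb.mpr (by simp [cb_one])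
    have h1 : ((⟨0, by omega⟩ : Fin (2 ^ (k + 1) - 1)), false) ∈ Sb k true := h ▸ h0
    have := mem_Sb.mp h1
    simp [cb_one] at this
  · -- Disjoint
    rw [Finset.disjoint_left]
    intro x hx hx'
    rw [mem_Sb] at hx hx'
    rw [hx'] at hx
    cases cb ((x.1 : ℕ) + 1) <;> simp at hx
  · -- Union
    apply Finset.eq_univ_of_forall
    rintro ⟨i, b⟩
    by_cases h : b = cb ((i : ℕ) + 1)
    · exact Finset.mem_union_left _ (mem_Sb.mpr (by simpa using h))
    · refine Finset.mem_union_right _ (mem_Sb.mpr ?_)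
      show b = xor true (cb ((i : ℕ) + 1))
      rw [Bool.true_xor]
      exact Bool.eq_not_iff.mpr h
  · -- uniqueness
    intro K hK hKcard
    rw [mem_indepSets] at hK
    have hinj : Set.InjOn Prod.fst (K : Set (Fin (2 ^ (k + 1) - 1) × Bool)) := by
      intro u hu v hv h
      by_contra hne
      exact hK u hu v hv (Or.inl ⟨h, fun hs => hne (Prod.ext h hs)⟩)
    have himg : K.image Prod.fst = Finset.univ := by
      apply Finset.eq_univ_of_card
      rw [Finset.card_image_of_injOn hinj, hKcard, Fintype.card_fin]
    have hsur : ∀ i : Fin (2 ^ (k + 1) - 1), ∃ b, (i, b) ∈ K := by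
      intro i
      have : i ∈ K.image Prod.fst := himg ▸ Finset.mem_univ i
      rcases Finset.mem_image.mp this with ⟨a, ha, rfl⟩
      exact ⟨a.2, by simpa using ha⟩
    have huniq : ∀ (i : Fin (2 ^ (k + 1) - 1)) (b1 b2 : Bool),
        (i, b1) ∈ K → (i, b2) ∈ K → b1 = b2 := by
      intro i b1 b2 h1 h2
      by_contra hne
      exact hK _ h1 _ h2 (Or.inl ⟨rfl, by simpa using hne⟩)
    choose g hg using hsur
    have h0lt : 0 < 2 ^ (k + 1) - 1 := by omega
    have hclaim : ∀ m : ℕ, ∀ hm : m < 2 ^ (k + 1) - 1,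
        g ⟨m, hm⟩ = xor (g ⟨0, h0lt⟩) (cb (m + 1)) := by
      intro m
      induction m using Nat.strong_induction_on with
      | _ m ih =>
        intro hm
        rcases Nat.eq_zero_or_pos m with rfl | hmpos
        · rw [cb_one, Bool.xor_false]
        · have hplt : (m + 1) / 2 - 1 < m := by omega
          have hpn : (m + 1) / 2 - 1 < 2 ^ (k + 1) - 1 := by omega
          have hpe : (m + 1) / 2 - 1 + 1 = (m + 1) / 2 := by omega
          have hIH := ih _ hplt hpn
          have hne : g ⟨(m + 1) / 2 - 1, hpn⟩ ≠ g ⟨m, hm⟩ := by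
            intro heq
            exact hK _ (hg ⟨(m + 1) / 2 - 1, hpn⟩) _ (hg ⟨m, hm⟩)
              (Or.inr ⟨heq, Or.inl (by simpa using hpe)⟩)
          have hcb : cb (m + 1) = !cb ((m + 1) / 2 - 1 + 1) := by
            rw [cb_step (by omega : 2 ≤ m + 1), hpe]
          rw [hIH] at hne
          rw [hcb, Bool.xor_not]
          exact Bool.eq_not_iff.mpr (Ne.symm hne)
    have hKmem : ∀ x : Fin (2 ^ (k + 1) - 1) × Bool,
        x ∈ K ↔ x.2 = xor (g ⟨0, h0lt⟩) (cb ((x.1 : ℕ) + 1)) := by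
      intro x
      constructor
      · intro hx
        have h1 := huniq x.1 x.2 (g x.1) (by simpa using hx) (hg x.1)
        rw [h1]
        exact hclaim _ x.1.isLt
      · intro hx
        have h2 : g x.1 = xor (g ⟨0, h0lt⟩) (cb ((x.1 : ℕ) + 1)) :=
          hclaim _ x.1.isLt
        have hxe : x = (x.1, g x.1) := Prod.ext rfl (hx.trans h2.symm)
        rw [hxe]
        exact hg x.1
    cases hb : g ⟨0, h0lt⟩ with
    | false =>
      left
      ext x
      rw [hKmem, mem_Sb, hb]
    | true =>
      right
      ext x
      rw [hKmem, mem_Sb, hb]
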